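/- The homomorphism φ : FreeGroup (Fin 3) → A_L sending the free generators g₀, g₁, g₂ to a, x, e is injective, and its range is exactly the kernel of the length homomorphism ℓ : A_L → ℤ. In particular, Γ_L := ker ℓ is a free group of rank 3, freely generated by a = ū₂⁻¹ū₁, x = ū₂⁻¹ū₃ and e = ū₃⁻¹ū₄. -/

import Mathlib

/-- The relator set of the right-angled Artin group of a simple graph `G`:
commutators of pairs of adjacent vertices. -/
def raagRels {V : Type*} (G : SimpleGraph V) : Set (FreeGroup V) :=
  {r | ∃ u v : V, G.Adj u v ∧
    r = FreeGroup.of u * FreeGroup.of v * (FreeGroup.of u)⁻¹ * (FreeGroup.of v)⁻¹}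

/-- The right-angled Artin group of a simple graph `G`. -/
abbrev RAAG {V : Type*} (G : SimpleGraph V) : Type _ :=
  PresentedGroup (raagRels G)

/-- The image `v̄` of a vertex (generator) `v` in the right-angled Artin group. -/
def RAAG.gen {V : Type*} (G : SimpleGraph V) (v : V) : RAAG G :=
  PresentedGroup.of (rels := raagRels G) v

/-- The path graph `L` on the four vertices `u₁ = 0, u₂ = 1, u₃ = 2, u₄ = 3`,
with edges `{u₁,u₂}, {u₂,u₃}, {u₃,u₄}`. -/
abbrev L : SimpleGraph (Fin 4) := SimpleGraph.pathGraph 4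

/-- The right-angled Artin group
`A_L = ⟨u₁,u₂,u₃,u₄ ∣ [u₁,u₂] = [u₂,u₃] = [u₃,u₄] = 1⟩`. -/
abbrev A_L : Type _ := RAAG L

/-- `a = ū₂⁻¹ū₁`. -/
def elt_a : A_L := (RAAG.gen L 1)⁻¹ * RAAG.gen L 0

/-- `x = ū₂⁻¹ū₃`. -/
def elt_x : A_L := (RAAG.gen L 1)⁻¹ * RAAG.gen L 2

/-- `e = ū₃⁻¹ū₄`. -/
def elt_e : A_L := (RAAG.gen L 2)⁻¹ * RAAG.gen L 3

/-- The homomorphism `φ : FreeGroup (Fin 3) →* A_L` with `φ g₀ = a`, `φ g₁ = x`,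
`φ g₂ = e`. -/
def phi : FreeGroup (Fin 3) →* A_L := FreeGroup.lift ![elt_a, elt_x, elt_e]

namespace Stmt5Aux

abbrev F3 := FreeGroup (Fin 3)

/-- commuting of adjacent generators in the RAAG -/
lemma gen_comm {u v : Fin 4} (h : L.Adj u v) :
    RAAG.gen L u * RAAG.gen L v = RAAG.gen L v * RAAG.gen L u := by
  have h1 : PresentedGroup.mk (raagRels L)
      (FreeGroup.of u * FreeGroup.of v * (FreeGroup.of u)⁻¹ * (FreeGroup.of v)⁻¹) = 1 := by
    apply (QuotientGroup.eq_one_iff _).2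
    exact Subgroup.subset_normalClosure ⟨u, v, h, rfl⟩
  have h2 : RAAG.gen L u * RAAG.gen L v * (RAAG.gen L u)⁻¹ * (RAAG.gen L v)⁻¹ = 1 := by
    simpa [RAAG.gen, PresentedGroup.of, map_mul, map_inv] using h1
  have h3 : RAAG.gen L u * RAAG.gen L v * ((RAAG.gen L v * RAAG.gen L u)⁻¹) = 1 := by
    rw [mul_inv_rev, ← mul_assoc]; exact h2
  exact mul_inv_eq_one.mp h3

lemma adj01 : L.Adj 0 1 := by rw [SimpleGraph.pathGraph_adj]; decide
lemma adj12 : L.Adj 1 2 := by rw [SimpleGraph.pathGraph_adj]; decide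
lemma adj23 : L.Adj 2 3 := by rw [SimpleGraph.pathGraph_adj]; decide

end Stmt5Aux

namespace Stmt5Aux

/-- the automorphism θ of F₃: fixes g₀,g₁, sends g₂ ↦ g₁⁻¹ g₂ g₁ -/
def th : F3 →* F3 :=
  FreeGroup.lift ![.of 0, .of 1, (.of 1)⁻¹ * .of 2 * .of 1]

/-- inverse of θ -/
def th' : F3 →* F3 :=
  FreeGroup.lift ![.of 0, .of 1, .of 1 * .of 2 * (.of 1)⁻¹]

@[simp] lemma th_of0 : th (.of 0) = .of 0 := by simp [th]
@[simp] lemma th_of1 : th (.of 1) = .of 1 := by simp [th]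
@[simp] lemma th_of2 : th (.of 2) = (.of 1)⁻¹ * .of 2 * .of 1 := by simp [th]
@[simp] lemma th'_of0 : th' (.of 0) = .of 0 := by simp [th']
@[simp] lemma th'_of1 : th' (.of 1) = .of 1 := by simp [th']
@[simp] lemma th'_of2 : th' (.of 2) = .of 1 * .of 2 * (.of 1)⁻¹ := by simp [th']

def thE : F3 ≃* F3 :=
  MonoidHom.toMulEquiv th th'
    (by ext i; fin_cases i <;> simp <;> group)
    (by ext i; fin_cases i <;> simp <;> group)

@[simp] lemma thE_apply (w : F3) : thE w = th w := rfl
@[simp] lemma thE_symm_apply (w : F3) : thE.symm w = th' w := rfl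

/-- the action of ℤ on F₃ by powers of θ -/
def act : Multiplicative ℤ →* MulAut F3 := zpowersHom (MulAut F3) thE

/-- the semidirect product F₃ ⋊ ℤ -/
abbrev SDP := SemidirectProduct F3 (Multiplicative ℤ) act

def z : Multiplicative ℤ := Multiplicative.ofAdd 1

@[simp] lemma act_z (w : F3) : act z w = th w := by
  simp [act, z, zpowersHom_apply]

@[simp] lemma act_z_inv (w : F3) : act z⁻¹ w = th' w := by
  simp [act, z, zpowersHom_apply]

@[simp] lemma act_z_inv' (w : F3) : (act z)⁻¹ w = th' w := by
  rw [← map_inv]; exact act_z_inv w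

@[simp] lemma act_z_symm (w : F3) : (act z).symm w = th' w := act_z_inv' w

/-- images of the four RAAG generators in the semidirect product -/
def wgen : Fin 4 → F3 := ![.of 0, 1, .of 1, .of 2 * .of 1]

def psiFun (i : Fin 4) : SDP := SemidirectProduct.inl (wgen i) * SemidirectProduct.inr z

lemma psi_rel : ∀ r ∈ raagRels L, FreeGroup.lift psiFun r = 1 := by
  rintro r ⟨u, v, huv, rfl⟩
  rw [SimpleGraph.pathGraph_adj] at huv
  have key : ∀ i j : Fin 4, wgen i * th (wgen j) = wgen j * th (wgen i) →
      FreeGroup.lift psiFun (FreeGroup.of i * FreeGroup.of j * (FreeGroup.of i)⁻¹ *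
        (FreeGroup.of j)⁻¹) = 1 := by
    intro i j hij
    have hcomm : psiFun i * psiFun j = psiFun j * psiFun i := by
      simp only [psiFun]
      ext
      · simp [hij]
      · simp [mul_comm]
    simp only [map_mul, map_inv, FreeGroup.lift_apply_of]
    rw [hcomm]
    group
  fin_cases u <;> fin_cases v <;>
    first
      | (exfalso; revert huv; decide)
      | (apply key; simp [wgen]; group)
      | (apply key; simp [wgen])

/-- the homomorphism ψ : A_L →* F₃ ⋊ ℤ -/
def psi : A_L →* SDP := PresentedGroup.toGroup psi_rel

@[simp] lemma psi_gen (i : Fin 4) :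
    psi (RAAG.gen L i) = SemidirectProduct.inl (wgen i) * SemidirectProduct.inr z :=
  PresentedGroup.toGroup.of psi_rel

lemma psi_comp_phi : psi.comp phi = SemidirectProduct.inl := by
  apply FreeGroup.ext_hom
  intro i
  fin_cases i <;>
    simp only [MonoidHom.comp_apply, phi, FreeGroup.lift_apply_of, Matrix.cons_val_zero,
      Matrix.cons_val_one, Matrix.head_cons, Matrix.cons_val_two, Matrix.tail_cons] <;>
    simp only [elt_a, elt_x, elt_e, map_mul, map_inv, psi_gen] <;>
    ext <;>
    (simp [wgen, mul_assoc]; try group)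

-- commuting facts, oriented to push `gen 1`,`gen 2` (i.e. u₂, u₃) rightwards
lemma H01 : Commute (RAAG.gen L 1) (RAAG.gen L 0) := (gen_comm adj01).symm
lemma H12 : Commute (RAAG.gen L 2) (RAAG.gen L 1) := (gen_comm adj12).symm
lemma H23 : Commute (RAAG.gen L 2) (RAAG.gen L 3) := gen_comm adj23

lemma phi_comp_th :
    phi.comp th = (MulAut.conj (RAAG.gen L 1)).toMonoidHom.comp phi := by
  apply FreeGroup.ext_hom
  intro i
  fin_cases i <;>
    simp [th, phi, elt_a, elt_x, elt_e, mul_assoc,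
      H01.eq, H01.left_comm, H01.inv_left.eq, H01.inv_left.left_comm,
      H01.inv_right.eq, H01.inv_right.left_comm,
      H01.inv_left.inv_right.eq, H01.inv_left.inv_right.left_comm,
      H12.eq, H12.left_comm, H12.inv_left.eq, H12.inv_left.left_comm,
      H12.inv_right.eq, H12.inv_right.left_comm,
      H12.inv_left.inv_right.eq, H12.inv_left.inv_right.left_comm,
      H23.eq, H23.left_comm, H23.inv_left.eq, H23.inv_left.left_comm,
      H23.inv_right.eq, H23.inv_right.left_comm,
      H23.inv_left.inv_right.eq, H23.inv_left.inv_right.left_comm]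

lemma phi_th (w : F3) : phi (th w) = RAAG.gen L 1 * phi w * (RAAG.gen L 1)⁻¹ := by
  have := DFunLike.congr_fun phi_comp_th w
  simpa using this

lemma phi_th' (w : F3) : phi (th' w) = (RAAG.gen L 1)⁻¹ * phi w * RAAG.gen L 1 := by
  have h1 : th (th' w) = w := by
    have : thE (thE.symm w) = w := thE.apply_symm_apply w
    simpa using this
  have h2 := phi_th (th' w)
  rw [h1] at h2
  rw [h2]; group

lemma phi_conj (n : ℤ) :
    ∀ w, phi ((thE ^ n) w) = RAAG.gen L 1 ^ n * phi w * (RAAG.gen L 1 ^ n)⁻¹ := by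
  induction n using Int.induction_on with
  | zero => simp
  | succ k ih =>
    intro w
    have h1 : (thE ^ ((k : ℤ) + 1)) w = (thE ^ (k : ℤ)) (thE w) := by
      rw [zpow_add_one]; rfl
    have h2 : thE w = th w := rfl
    rw [h1, h2, ih, phi_th]
    group
  | pred k ih =>
    intro w
    have h1 : (thE ^ (-(k : ℤ) - 1)) w = (thE ^ (-(k : ℤ))) (thE.symm w) := by
      rw [zpow_sub_one]; rfl
    have h2 : thE.symm w = th' w := rfl
    rw [h1, h2, ih, phi_th']
    group

lemma chi_cond (g : Multiplicative ℤ) :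
    phi.comp ((act g).toMonoidHom) =
      (MulAut.conj ((zpowersHom A_L (RAAG.gen L 1)) g)).toMonoidHom.comp phi := by
  apply MonoidHom.ext
  intro w
  have h1 : act g = thE ^ (Multiplicative.toAdd g) := by simp [act, zpowersHom_apply]
  have h2 : (zpowersHom A_L (RAAG.gen L 1)) g = RAAG.gen L 1 ^ (Multiplicative.toAdd g) := by
    simp [zpowersHom_apply]
  simp only [MonoidHom.comp_apply, MulEquiv.coe_toMonoidHom, MulAut.conj_apply, h1, h2]
  exact phi_conj _ w

/-- the homomorphism χ : F₃ ⋊ ℤ →* A_L, inverse to ψ -/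
def chi : SDP →* A_L := SemidirectProduct.lift phi (zpowersHom A_L (RAAG.gen L 1)) chi_cond

lemma chi_psi : chi.comp psi = MonoidHom.id A_L := by
  apply PresentedGroup.ext
  intro i
  show chi (psi (RAAG.gen L i)) = RAAG.gen L i
  fin_cases i <;>
    simp [psi_gen, wgen, chi, z, phi, elt_a, elt_x, elt_e, zpowersHom_apply, mul_assoc,
      H01.eq, H01.left_comm, H01.inv_left.eq, H01.inv_left.left_comm,
      H01.inv_right.eq, H01.inv_right.left_comm,
      H01.inv_left.inv_right.eq, H01.inv_left.inv_right.left_comm,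
      H12.eq, H12.left_comm, H12.inv_left.eq, H12.inv_left.left_comm,
      H12.inv_right.eq, H12.inv_right.left_comm,
      H12.inv_left.inv_right.eq, H12.inv_left.inv_right.left_comm,
      H23.eq, H23.left_comm, H23.inv_left.eq, H23.inv_left.left_comm,
      H23.inv_right.eq, H23.inv_right.left_comm,
      H23.inv_left.inv_right.eq, H23.inv_left.inv_right.left_comm]

end Stmt5Aux


theorem stmt_5 (ℓ : A_L →* Multiplicative ℤ)
    (hℓ : ∀ i : Fin 4, ℓ (RAAG.gen L i) = Multiplicative.ofAdd 1) :
    Function.Injective phi ∧ phi.range = ℓ.ker := by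
  open Stmt5Aux SemidirectProduct in
  have hrs : rightHom.comp psi = ℓ := by
    apply PresentedGroup.ext
    intro i
    show rightHom (psi (RAAG.gen L i)) = ℓ (RAAG.gen L i)
    rw [hℓ i, psi_gen]
    simp [z]
  have hpc : ∀ w, psi (phi w) = inl w := fun w => DFunLike.congr_fun psi_comp_phi w
  have hcp : ∀ g : A_L, chi (psi g) = g := fun g => DFunLike.congr_fun chi_psi g
  constructor
  · intro w₁ w₂ h
    apply inl_injective (φ := act)
    rw [← hpc, ← hpc, h]
  · ext g
    simp only [MonoidHom.mem_range, MonoidHom.mem_ker]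
    constructor
    · rintro ⟨w, rfl⟩
      rw [← DFunLike.congr_fun hrs (phi w)]
      show rightHom (psi (phi w)) = 1
      rw [hpc]
      simp
    · intro hg
      refine ⟨(psi g).left, ?_⟩
      have h1 : (psi g).right = 1 := by
        have := DFunLike.congr_fun hrs g
        simp only [MonoidHom.comp_apply] at this
        rw [← this] at hg
        exact hg
      have h2 : inl (psi g).left = psi g := by
        rw [← inl_left_mul_inr_right (psi g), h1]
        simp
      calc phi (psi g).left = chi (inl (psi g).left) := (lift_inl _ _ _ _).symm
        _ = chi (psi g) := by rw [h2]
        _ = g := hcp g
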